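/- arXiv:1602.03899 — 2 statements merged into one kernel-verified Lean document; each statement's English description precedes it below -/
import Mathlib

section
/- Suppose G is a graph and M = M[IAS(G)] satisfies κ(M) < n. Then there is a subset X ⊆ V such that τ_G(X) is a vertical κ(M)-separation of M and κ(M) = 2·c_G(X) + 1. -/
set_option linter.unusedSectionVars false


open scoped ENat

variable {V : Type*} [Fintype V] [DecidableEq V]

/-- The column of the matrix `IAS(G) = (I | A | A+I)` indexed by `(v, i)`:
`i = 0` gives `φ(v)` (identity column), `i = 1` gives `χ(v)` (column of `A`),
`i = 2` gives `ψ(v)` (column of `A + I`). -/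
def iasCol (A : Matrix V V (ZMod 2)) : V × Fin 3 → V → ZMod 2 :=
  fun p w =>
    if p.2 = 0 then (if w = p.1 then 1 else 0)
    else if p.2 = 1 then A w p.1
    else A w p.1 + (if w = p.1 then 1 else 0)

/-- The rank of a subset of the ground set `W(G) = V × Fin 3` of the isotropic
matroid: the GF(2)-rank of the corresponding set of columns. -/
noncomputable def iasRank (A : Matrix V V (ZMod 2)) (S : Set (V × Fin 3)) : ℕ :=
  Module.finrank (ZMod 2) (Submodule.span (ZMod 2) (iasCol A '' S))

/-- The connectivity function `λ(S) = r(S) + r(W - S) - r(M)`. -/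
noncomputable def iasLambda (A : Matrix V V (ZMod 2)) (S : Set (V × Fin 3)) : ℕ :=
  iasRank A S + iasRank A Sᶜ - iasRank A Set.univ

/-- Independence in the isotropic matroid. -/
def iasIndep (A : Matrix V V (ZMod 2)) (S : Set (V × Fin 3)) : Prop :=
  LinearIndependent (ZMod 2) (fun s : S => iasCol A s.1)

/-- Circuits of the isotropic matroid: minimal dependent sets. -/
def iasCircuit (A : Matrix V V (ZMod 2)) (C : Set (V × Fin 3)) : Prop :=
  ¬ iasIndep A C ∧ ∀ S ⊂ C, iasIndep A S

/-- An ordinary `k`-separation: `λ(S) < k` and `|S|, |W - S| ≥ k`. -/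
def OrdinarySep (A : Matrix V V (ZMod 2)) (k : ℕ) (S : Set (V × Fin 3)) : Prop :=
  0 < k ∧ iasLambda A S < k ∧ k ≤ S.ncard ∧ k ≤ Sᶜ.ncard

/-- A cyclic `k`-separation: `λ(S) < k` and both `S` and `W - S` are dependent. -/
def CyclicSep (A : Matrix V V (ZMod 2)) (k : ℕ) (S : Set (V × Fin 3)) : Prop :=
  0 < k ∧ iasLambda A S < k ∧ ¬ iasIndep A S ∧ ¬ iasIndep A Sᶜ

/-- A vertical `k`-separation: `λ(S) < k` and `r(S), r(W - S) ≥ k`. -/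
def VerticalSep (A : Matrix V V (ZMod 2)) (k : ℕ) (S : Set (V × Fin 3)) : Prop :=
  0 < k ∧ iasLambda A S < k ∧ k ≤ iasRank A S ∧ k ≤ iasRank A Sᶜ

/-- `τ(M) = min {k : M has an ordinary k-separation}`, with `min ∅ = ∞`. -/
noncomputable def iasTau (A : Matrix V V (ZMod 2)) : ℕ∞ :=
  sInf {k : ℕ∞ | ∃ m : ℕ, (m : ℕ∞) = k ∧ ∃ S, OrdinarySep A m S}

/-- `κ*(M) = min ({k : M has a cyclic k-separation} ∪ {|W| - r(M)})`. -/
noncomputable def iasKappaStar (A : Matrix V V (ZMod 2)) : ℕ :=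
  sInf ({k : ℕ | ∃ S, CyclicSep A k S} ∪ {3 * Fintype.card V - iasRank A Set.univ})

/-- `κ(M) = min ({k : M has a vertical k-separation} ∪ {r(M)})`. -/
noncomputable def iasKappa (A : Matrix V V (ZMod 2)) : ℕ :=
  sInf ({k : ℕ | ∃ S, VerticalSep A k S} ∪ {iasRank A Set.univ})

/-- The simple graph underlying a looped simple graph given by its adjacency matrix. -/
def toSimpleGraph (A : Matrix V V (ZMod 2)) : SimpleGraph V where
  Adj v w := v ≠ w ∧ A v w = 1 ∧ A w v = 1
  symm := ⟨fun v w ⟨h1, h2, h3⟩ => ⟨Ne.symm h1, h3, h2⟩⟩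
  loopless := ⟨fun v h => h.1 rfl⟩

/-- The open neighborhood `N_G(v)`. -/
def nbhd (A : Matrix V V (ZMod 2)) (v : V) : Set V := {u | u ≠ v ∧ A v u = 1}

/-- `v` is a pendant vertex: `N_G(v) = {w}` for some `w`. -/
def IsPendant (A : Matrix V V (ZMod 2)) (v : V) : Prop := ∃ w, nbhd A v = {w}

/-- `G` has a pair of twin vertices: `v ≠ w` with `N_G(v) - {w} = N_G(w) - {v}`. -/
def HasTwins (A : Matrix V V (ZMod 2)) : Prop :=
  ∃ v w, v ≠ w ∧ nbhd A v \ {w} = nbhd A w \ {v}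

/-- The cut-rank `c_G(X)`: the GF(2)-rank of the submatrix `A[V - X, X]`
(columns indexed by `X`, rows indexed by `V - X`). -/
noncomputable def cutRank (A : Matrix V V (ZMod 2)) (X : Set V) : ℕ :=
  Module.finrank (ZMod 2)
    (Submodule.span (ZMod 2) ((fun x : V => fun w : ↥(Xᶜ) => A w.1 x) '' X))

/-- `τ_G(X) = ⋃_{x ∈ X} τ_G(x)`, the union of the vertex triples of members of `X`. -/
def tauSet (X : Set V) : Set (V × Fin 3) := {p | p.1 ∈ X}

/-- Loop complementation at `v`. -/
def loopComp (A : Matrix V V (ZMod 2)) (v : V) : Matrix V V (ZMod 2) :=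
  fun x y => A x y + if x = v ∧ y = v then 1 else 0

/-- Simple local complementation at `v`. -/
def simpleLocalComp (A : Matrix V V (ZMod 2)) (v : V) : Matrix V V (ZMod 2) :=
  fun x y => A x y +
    if x ≠ y ∧ (x ≠ v ∧ A v x = 1) ∧ (y ≠ v ∧ A v y = 1) then 1 else 0

/-- Non-simple local complementation at `v`. -/
def nonSimpleLocalComp (A : Matrix V V (ZMod 2)) (v : V) : Matrix V V (ZMod 2) :=
  fun x y => simpleLocalComp A v x y + if x = y ∧ x ≠ v ∧ A v x = 1 then 1 else 0

/-- One local move. -/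
def LocalStep (A B : Matrix V V (ZMod 2)) : Prop :=
  ∃ v, B = loopComp A v ∨ B = simpleLocalComp A v ∨ B = nonSimpleLocalComp A v

/-- Local equivalence: a finite sequence of loop complementations and
(simple or non-simple) local complementations. -/
def LocallyEquiv (A B : Matrix V V (ZMod 2)) : Prop :=
  Relation.ReflTransGen LocalStep A B

/-- `G` has a split: a bipartition `(V₁, V₂)` of `V` with `|V₁|, |V₂| ≥ 2` such that the
GF(2)-rank of `A[V₁, V₂]` is at most 1. -/
def HasSplit (A : Matrix V V (ZMod 2)) : Prop :=
  ∃ X : Set V, 2 ≤ X.ncard ∧ 2 ≤ Xᶜ.ncard ∧ cutRank A X ≤ 1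

/-- A transverse circuit: a circuit of the isotropic matroid meeting each
vertex triple at most once. -/
def IsTransverseCircuit (A : Matrix V V (ZMod 2)) (C : Set (V × Fin 3)) : Prop :=
  iasCircuit A C ∧ ∀ p ∈ C, ∀ q ∈ C, p.1 = q.1 → p = q

/-- An isotropic `k`-separation of `G`: `|X|, |V - X| ≥ k` and `c_G(X) < k`. -/
def IsotropicSep (A : Matrix V V (ZMod 2)) (k : ℕ) (X : Set V) : Prop :=
  k ≤ X.ncard ∧ k ≤ Xᶜ.ncard ∧ cutRank A X < k

/-- The isotropic connectivity `κ_B(G)`, with `min ∅ = ∞`. -/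
noncomputable def kappaB (A : Matrix V V (ZMod 2)) : ℕ∞ :=
  sInf {j : ℕ∞ | ∃ k : ℕ, (k : ℕ∞) = j ∧ ∃ X, IsotropicSep A k X}

/-- The 5-cycle `C₅`. -/
def C5mat : Matrix (Fin 5) (Fin 5) (ZMod 2) :=
  fun i j => if (i.val + 1) % 5 = j.val ∨ (j.val + 1) % 5 = i.val then 1 else 0

/-- The wheel `W₅` : a 5-cycle on `{0,…,4}` plus a hub `5` adjacent to all. -/
def W5mat : Matrix (Fin 6) (Fin 6) (ZMod 2) :=
  fun i j =>
    if (i.val = 5 ∧ j.val ≠ 5) ∨ (j.val = 5 ∧ i.val ≠ 5) then 1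
    else if i.val ≠ 5 ∧ j.val ≠ 5 ∧ ((i.val + 1) % 5 = j.val ∨ (j.val + 1) % 5 = i.val) then 1
    else 0
-- ### auxiliary development

open Submodule Module Set

section Aux

variable (A : Matrix V V (ZMod 2))

lemma iasCol_zero (v : V) (w : V) : iasCol A (v, 0) w = if w = v then 1 else 0 := rfl

lemma iasCol_one (v : V) (w : V) : iasCol A (v, 1) w = A w v := rfl

lemma iasCol_two (v : V) (w : V) : iasCol A (v, 2) w = A w v + if w = v then 1 else 0 := rfl

lemma iasCol_t0 (v : V) : iasCol A (v, 0) = iasCol A (v, 1) + iasCol A (v, 2) := by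
  funext w
  have h : ∀ a b : ZMod 2, b = a + (a + b) := by decide
  simpa [iasCol_zero, iasCol_one, iasCol_two] using h (A w v) _

lemma iasCol_t1 (v : V) : iasCol A (v, 1) = iasCol A (v, 0) + iasCol A (v, 2) := by
  funext w
  have h : ∀ a b : ZMod 2, a = b + (a + b) := by decide
  simpa [iasCol_zero, iasCol_one, iasCol_two] using h (A w v) _

lemma iasCol_t2 (v : V) : iasCol A (v, 2) = iasCol A (v, 0) + iasCol A (v, 1) := by
  funext w
  have h : ∀ a b : ZMod 2, a + b = b + a := by decide
  simpa [iasCol_zero, iasCol_one, iasCol_two] using h (A w v) _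

lemma iasSpan_univ : span (ZMod 2) (iasCol A '' Set.univ) = ⊤ := by
  rw [eq_top_iff]
  intro g _
  rw [pi_eq_sum_univ g]
  refine sum_mem fun v _ => smul_mem _ _ (subset_span ⟨(v, 0), trivial, ?_⟩)
  funext w
  simp [iasCol_zero, eq_comm]

lemma iasRank_univ : iasRank A Set.univ = Fintype.card V := by
  unfold iasRank
  rw [iasSpan_univ, finrank_top, Module.finrank_pi]

lemma iasRank_mono {S T : Set (V × Fin 3)} (h : S ⊆ T) : iasRank A S ≤ iasRank A T :=
  Submodule.finrank_mono (span_mono (Set.image_mono h))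

lemma card_le_rank_add (S : Set (V × Fin 3)) :
    Fintype.card V ≤ iasRank A S + iasRank A Sᶜ := by
  have hsup : span (ZMod 2) (iasCol A '' S) ⊔ span (ZMod 2) (iasCol A '' Sᶜ) = ⊤ := by
    rw [← span_union, ← Set.image_union, Set.union_compl_self, iasSpan_univ]
  have h := finrank_sup_add_finrank_inf_eq (span (ZMod 2) (iasCol A '' S))
      (span (ZMod 2) (iasCol A '' Sᶜ))
  rw [hsup, finrank_top, Module.finrank_pi] at h
  unfold iasRank
  omega

lemma iasRank_insert_le (a : V × Fin 3) (S : Set (V × Fin 3)) :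
    iasRank A (insert a S) ≤ iasRank A S + 1 := by
  unfold iasRank
  rw [Set.image_insert_eq, Submodule.span_insert]
  have h1 : finrank (ZMod 2) ↥(span (ZMod 2) {iasCol A a}) ≤ 1 := by
    rcases eq_or_ne (iasCol A a) 0 with h | h
    · rw [h, Submodule.span_zero_singleton]
      simp
    · rw [finrank_span_singleton h]
  have h := finrank_sup_add_finrank_inf_eq (span (ZMod 2) {iasCol A a})
      (span (ZMod 2) (iasCol A '' S))
  have hle := Submodule.finrank_mono (le_sup_left :
    span (ZMod 2) {iasCol A a} ≤ _ ⊔ span (ZMod 2) (iasCol A '' S))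
  omega

lemma iasRank_insert_eq {a : V × Fin 3} {S : Set (V × Fin 3)}
    (h : iasCol A a ∈ span (ZMod 2) (iasCol A '' S)) :
    iasRank A (insert a S) = iasRank A S := by
  unfold iasRank
  rw [Set.image_insert_eq, span_insert_eq_span h]

lemma iasLambda_eq (S : Set (V × Fin 3)) :
    iasLambda A S = iasRank A S + iasRank A Sᶜ - Fintype.card V := by
  unfold iasLambda
  rw [iasRank_univ]

lemma vs_compl {k : ℕ} {S : Set (V × Fin 3)} (h : VerticalSep A k S) :
    VerticalSep A k Sᶜ := by
  obtain ⟨h0, h1, h2, h3⟩ := h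
  refine ⟨h0, ?_, h3, by rwa [compl_compl]⟩
  unfold iasLambda at h1 ⊢
  rw [compl_compl]
  omega

end Aux

section Kappa

variable {A : Matrix V V (ZMod 2)} {κ : ℕ}

/-- The exact-lambda lemma. -/
lemma lambda_exact (hmin : ∀ j T, VerticalSep A j T → κ ≤ j)
    {S : Set (V × Fin 3)} (hS : VerticalSep A κ S) :
    iasRank A S + iasRank A Sᶜ + 1 = Fintype.card V + κ := by
  obtain ⟨h0, h1, h2, h3⟩ := hS
  rw [iasLambda_eq] at h1
  have hle := card_le_rank_add A S
  by_contra hne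
  set j := iasRank A S + iasRank A Sᶜ + 1 - Fintype.card V with hj
  have hjκ : j < κ := by omega
  have : κ ≤ j := hmin j S ⟨by omega, by rw [iasLambda_eq]; omega, by omega, by omega⟩
  omega

/-- Remove an element of `S` spanned by the complement. -/
lemma removeOne (hmin : ∀ j T, VerticalSep A j T → κ ≤ j)
    {S : Set (V × Fin 3)} (hS : VerticalSep A κ S) {a : V × Fin 3} (ha : a ∈ S)
    (hsp : iasCol A a ∈ span (ZMod 2) (iasCol A '' Sᶜ)) :
    VerticalSep A κ (S \ {a}) := by
  have hlam := lambda_exact hmin hS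
  obtain ⟨h0, h1, h2, h3⟩ := hS
  have hcompl : (S \ {a})ᶜ = insert a Sᶜ := by
    ext p; by_cases hp : p = a <;> simp [hp, ha]
  have hrc : iasRank A (S \ {a})ᶜ = iasRank A Sᶜ := by
    rw [hcompl, iasRank_insert_eq A hsp]
  have hSins : insert a (S \ {a}) = S := by
    rw [Set.insert_diff_singleton, Set.insert_eq_self.mpr ha]
  have hup : iasRank A S ≤ iasRank A (S \ {a}) + 1 := by
    conv_lhs => rw [← hSins]
    exact iasRank_insert_le A a _
  have hdown : iasRank A (S \ {a}) ≤ iasRank A S :=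
    iasRank_mono A Set.diff_subset
  rcases eq_or_lt_of_le hdown with heq | hlt
  · exact ⟨h0, by rw [iasLambda_eq]; rw [iasLambda_eq] at h1; omega,
      by omega, by omega⟩
  · exfalso
    have hge := card_le_rank_add A (S \ {a})
    rw [hrc] at hge
    -- then κ ≥ 2 and S \ {a} is a vertical (κ-1)-separation
    have : κ ≤ κ - 1 := hmin (κ - 1) (S \ {a})
      ⟨by omega, by rw [iasLambda_eq, hrc]; omega, by omega, by omega⟩
    omega

lemma addOne (hmin : ∀ j T, VerticalSep A j T → κ ≤ j)
    {S : Set (V × Fin 3)} (hS : VerticalSep A κ S) {a : V × Fin 3} (ha : a ∉ S)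
    (hsp : iasCol A a ∈ span (ZMod 2) (iasCol A '' S)) :
    VerticalSep A κ (insert a S) := by
  have h1 : VerticalSep A κ (Sᶜ \ {a}) := by
    refine removeOne hmin (vs_compl A hS) ha ?_
    rwa [compl_compl]
  have h2 := vs_compl A h1
  have : (Sᶜ \ {a})ᶜ = insert a S := by
    ext p; by_cases hp : p = a <;> simp [hp, ha]
  rwa [this] at h2

end Kappa

-- ### the unsplitting induction

/-- Vertices whose triple is split by `S`. -/
def iasBad (S : Set (V × Fin 3)) : Set V :=
  {v | (∃ i, (v, i) ∈ S) ∧ ∃ j, (v, j) ∉ S}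

lemma bad_subset_diff {S : Set (V × Fin 3)} {v : V} (hv : v ∈ iasBad S)
    {a : V × Fin 3} (ha : a.1 = v) : iasBad (S \ {a}) ⊆ iasBad S := by
  intro w hw
  by_cases hwv : w = v
  · subst hwv; exact hv
  · obtain ⟨⟨i, hi⟩, ⟨j, hj⟩⟩ := hw
    refine ⟨⟨i, hi.1⟩, ⟨j, fun hjS => hj ⟨hjS, ?_⟩⟩⟩
    simp only [Set.mem_singleton_iff]
    intro he
    exact hwv (by rw [← ha, ← he])

lemma bad_subset_insert {S : Set (V × Fin 3)} {v : V} (hv : v ∈ iasBad S)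
    {a : V × Fin 3} (ha : a.1 = v) : iasBad (insert a S) ⊆ iasBad S := by
  intro w hw
  by_cases hwv : w = v
  · subst hwv; exact hv
  · obtain ⟨⟨i, hi⟩, ⟨j, hj⟩⟩ := hw
    rcases hi with hi | hi
    · exact absurd (by rw [← ha, ← hi]) hwv
    · exact ⟨⟨i, hi⟩, ⟨j, fun hjS => hj (Set.mem_insert_of_mem _ hjS)⟩⟩

lemma mem_span_pair {A : Matrix V V (ZMod 2)} {T : Set (V × Fin 3)}
    {a b c : V × Fin 3} (hb : b ∈ T) (hc : c ∈ T)
    (h : iasCol A a = iasCol A b + iasCol A c) :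
    iasCol A a ∈ Submodule.span (ZMod 2) (iasCol A '' T) := by
  rw [h]
  exact add_mem (Submodule.subset_span ⟨b, hb, rfl⟩) (Submodule.subset_span ⟨c, hc, rfl⟩)

lemma moveStep {A : Matrix V V (ZMod 2)} {κ : ℕ}
    (hmin : ∀ j T, VerticalSep A j T → κ ≤ j)
    {S : Set (V × Fin 3)} (hS : VerticalSep A κ S) {v : V} (hv : v ∈ iasBad S) :
    ∃ S', VerticalSep A κ S' ∧ iasBad S' ⊆ iasBad S ∧ v ∉ iasBad S' := by
  obtain ⟨⟨i, hi⟩, ⟨j, hj⟩⟩ := hv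
  have hvb : v ∈ iasBad S := ⟨⟨i, hi⟩, ⟨j, hj⟩⟩
  by_cases h0 : (v, (0 : Fin 3)) ∈ S <;> by_cases h1 : (v, (1 : Fin 3)) ∈ S <;>
    by_cases h2 : (v, (2 : Fin 3)) ∈ S
  · -- all in: contradiction
    exfalso
    have : ∀ j : Fin 3, (v, j) ∈ S := by intro j; fin_cases j <;> assumption
    exact hj (this j)
  · -- 0,1 in, 2 out: insert (v,2)
    refine ⟨insert (v, 2) S, addOne hmin hS h2 (mem_span_pair h0 h1 (iasCol_t2 A v)),
      bad_subset_insert hvb rfl, ?_⟩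
    rintro ⟨-, jj, hjj⟩
    have : ∀ j : Fin 3, (v, j) ∈ insert ((v : V), (2 : Fin 3)) S := by
      intro j; fin_cases j
      · exact Set.mem_insert_of_mem _ h0
      · exact Set.mem_insert_of_mem _ h1
      · exact Set.mem_insert _ _
    exact hjj (this jj)
  · -- 0,2 in, 1 out: insert (v,1)
    refine ⟨insert (v, 1) S, addOne hmin hS h1 (mem_span_pair h0 h2 (iasCol_t1 A v)),
      bad_subset_insert hvb rfl, ?_⟩
    rintro ⟨-, jj, hjj⟩
    have : ∀ j : Fin 3, (v, j) ∈ insert ((v : V), (1 : Fin 3)) S := by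
      intro j; fin_cases j
      · exact Set.mem_insert_of_mem _ h0
      · exact Set.mem_insert _ _
      · exact Set.mem_insert_of_mem _ h2
    exact hjj (this jj)
  · -- only 0 in: remove (v,0)
    have hsp : iasCol A (v, 0) ∈ Submodule.span (ZMod 2) (iasCol A '' Sᶜ) :=
      mem_span_pair h1 h2 (iasCol_t0 A v)
    refine ⟨S \ {(v, 0)}, removeOne hmin hS h0 hsp, bad_subset_diff hvb rfl, ?_⟩
    rintro ⟨⟨ii, hii⟩, -⟩
    fin_cases ii
    · exact hii.2 rfl
    · exact h1 hii.1
    · exact h2 hii.1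
  · -- 1,2 in, 0 out: insert (v,0)
    refine ⟨insert (v, 0) S, addOne hmin hS h0 (mem_span_pair h1 h2 (iasCol_t0 A v)),
      bad_subset_insert hvb rfl, ?_⟩
    rintro ⟨-, jj, hjj⟩
    have : ∀ j : Fin 3, (v, j) ∈ insert ((v : V), (0 : Fin 3)) S := by
      intro j; fin_cases j
      · exact Set.mem_insert _ _
      · exact Set.mem_insert_of_mem _ h1
      · exact Set.mem_insert_of_mem _ h2
    exact hjj (this jj)
  · -- only 1 in: remove (v,1)
    have hsp : iasCol A (v, 1) ∈ Submodule.span (ZMod 2) (iasCol A '' Sᶜ) :=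
      mem_span_pair h0 h2 (iasCol_t1 A v)
    refine ⟨S \ {(v, 1)}, removeOne hmin hS h1 hsp, bad_subset_diff hvb rfl, ?_⟩
    rintro ⟨⟨ii, hii⟩, -⟩
    fin_cases ii
    · exact h0 hii.1
    · exact hii.2 rfl
    · exact h2 hii.1
  · -- only 2 in: remove (v,2)
    have hsp : iasCol A (v, 2) ∈ Submodule.span (ZMod 2) (iasCol A '' Sᶜ) :=
      mem_span_pair h0 h1 (iasCol_t2 A v)
    refine ⟨S \ {(v, 2)}, removeOne hmin hS h2 hsp, bad_subset_diff hvb rfl, ?_⟩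
    rintro ⟨⟨ii, hii⟩, -⟩
    fin_cases ii
    · exact h0 hii.1
    · exact h1 hii.1
    · exact hii.2 rfl
  · -- all out: contradiction
    exfalso
    have : ∀ i : Fin 3, (v, i) ∉ S := by intro i; fin_cases i <;> assumption
    exact this i hi

lemma unsplit {A : Matrix V V (ZMod 2)} {κ : ℕ}
    (hmin : ∀ j T, VerticalSep A j T → κ ≤ j) :
    ∀ (m : ℕ) (S : Set (V × Fin 3)), (iasBad S).ncard ≤ m → VerticalSep A κ S →
      ∃ X : Set V, VerticalSep A κ (tauSet X) := by
  have base : ∀ S : Set (V × Fin 3), iasBad S = ∅ → VerticalSep A κ S →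
      ∃ X : Set V, VerticalSep A κ (tauSet X) := by
    intro S hb hS
    refine ⟨{v | (v, 0) ∈ S}, ?_⟩
    have hTS : tauSet {v | (v, (0 : Fin 3)) ∈ S} = S := by
      ext ⟨v, i⟩
      have hv : v ∉ iasBad S := by rw [hb]; exact Set.notMem_empty v
      simp only [iasBad, Set.mem_setOf_eq, not_and, not_exists, not_forall,
        not_not] at hv
      constructor
      · intro hmem
        exact hv ⟨0, hmem⟩ i
      · intro hmem
        exact hv ⟨i, hmem⟩ 0
    rwa [hTS]
  intro m
  induction m with
  | zero =>
    intro S hcard hS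
    exact base S ((Set.ncard_eq_zero (Set.toFinite _)).mp (Nat.le_zero.mp hcard)) hS
  | succ m ih =>
    intro S hcard hS
    rcases Set.eq_empty_or_nonempty (iasBad S) with hb | ⟨v, hv⟩
    · exact base S hb hS
    · obtain ⟨S', hS', hsub, hv'⟩ := moveStep hmin hS hv
      have hss : iasBad S' ⊂ iasBad S :=
        hsub.ssubset_of_ne (fun he => hv' (he.symm ▸ hv))
      have := Set.ncard_lt_ncard hss (Set.toFinite _)
      exact ih S' (by omega) hS'

-- ### rank of tauSet and cut-rank

lemma tauSet_compl (X : Set V) : (tauSet X)ᶜ = tauSet Xᶜ := rfl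

lemma iasRank_tauSet (A : Matrix V V (ZMod 2)) (X : Set V) :
    iasRank A (tauSet X) = X.ncard + cutRank A X := by
  classical
  set π : (V → ZMod 2) →ₗ[ZMod 2] (↥(Xᶜ) → ZMod 2) :=
    LinearMap.funLeft (ZMod 2) (ZMod 2) Subtype.val with hπdef
  set U : Submodule (ZMod 2) (V → ZMod 2) :=
    Submodule.span (ZMod 2) (iasCol A '' tauSet X) with hUdef
  have hrn := LinearMap.finrank_range_add_finrank_ker (π.domRestrict U)
  -- the kernel of π is contained in U
  have hkerU : LinearMap.ker π ≤ U := by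
    intro g hg
    have hg' : ∀ w : ↥(Xᶜ), g w.1 = 0 := fun w => congrFun (LinearMap.mem_ker.mp hg) w
    rw [pi_eq_sum_univ g]
    refine sum_mem fun v _ => ?_
    by_cases hvX : v ∈ X
    · refine smul_mem _ _ (Submodule.subset_span ⟨(v, 0), hvX, ?_⟩)
      funext w
      simp [iasCol_zero, eq_comm]
    · have : g v = 0 := hg' ⟨v, hvX⟩
      rw [this, zero_smul]
      exact zero_mem _
  -- dimension of the kernel of the restriction
  have hsurj : Function.Surjective π :=
    LinearMap.funLeft_surjective_of_injective _ _ _ Subtype.val_injective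
  have hkerdim : Module.finrank (ZMod 2) ↥(LinearMap.ker π) = X.ncard := by
    have h1 := LinearMap.finrank_range_add_finrank_ker π
    rw [LinearMap.range_eq_top.mpr hsurj, finrank_top, Module.finrank_pi,
      Module.finrank_pi] at h1
    have h2 : Fintype.card ↥(Xᶜ) = Xᶜ.ncard := by
      rw [← Nat.card_eq_fintype_card, Nat.card_coe_set_eq]
    have h3 := Set.ncard_add_ncard_compl X
    rw [Nat.card_eq_fintype_card] at h3
    omega
  have hkerres : Module.finrank (ZMod 2) ↥(LinearMap.ker (π.domRestrict U)) = X.ncard := by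
    have he : LinearMap.ker (π.domRestrict U) = (LinearMap.ker π ⊓ U).comap U.subtype := by
      ext x
      simp [LinearMap.mem_ker, LinearMap.domRestrict_apply, x.2]
    rw [he]
    have heq : ((LinearMap.ker π ⊓ U).comap U.subtype) ≃ₗ[ZMod 2] ↥(LinearMap.ker π ⊓ U) :=
      Submodule.comapSubtypeEquivOfLe inf_le_right
    rw [heq.finrank_eq, inf_eq_left.mpr hkerU, hkerdim]
  -- the image of U under π is the span of the cut columns
  have himg : Submodule.map π U =
      Submodule.span (ZMod 2) ((fun x : V => fun w : ↥(Xᶜ) => A w.1 x) '' X) := by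
    rw [hUdef, Submodule.map_span]
    apply le_antisymm
    · rw [Submodule.span_le]
      rintro _ ⟨_, ⟨⟨v, i⟩, hv, rfl⟩, rfl⟩
      have hvX : v ∈ X := hv
      match i with
      | 0 =>
        have : π (iasCol A (v, 0)) = 0 := by
          funext w
          have hw : w.1 ≠ v := fun hww => w.2 (hww ▸ hvX)
          simp [hπdef, LinearMap.funLeft_apply, iasCol_zero, hw]
        rw [this]; exact zero_mem _
      | 1 =>
        refine Submodule.subset_span ⟨v, hvX, ?_⟩
        funext w
        simp [hπdef, LinearMap.funLeft_apply, iasCol_one]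
      | 2 =>
        have : π (iasCol A (v, 2)) = fun w : ↥(Xᶜ) => A w.1 v := by
          funext w
          have hw : w.1 ≠ v := fun hww => w.2 (hww ▸ hvX)
          simp [hπdef, LinearMap.funLeft_apply, iasCol_two, hw]
        rw [this]
        exact Submodule.subset_span ⟨v, hvX, rfl⟩
    · rw [Submodule.span_le]
      rintro _ ⟨v, hv, rfl⟩
      refine Submodule.subset_span ⟨iasCol A (v, 1), ⟨(v, 1), hv, rfl⟩, ?_⟩
      funext w
      simp [hπdef, LinearMap.funLeft_apply, iasCol_one]
  have hrange : Module.finrank (ZMod 2) ↥(LinearMap.range (π.domRestrict U)) = cutRank A X := by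
    rw [LinearMap.range_domRestrict, himg]
    rfl
  have hfin : Module.finrank (ZMod 2) ↥U = iasRank A (tauSet X) := rfl
  rw [hrange, hkerres, hfin] at hrn
  omega

open Classical in
lemma cutRank_eq_rank (A : Matrix V V (ZMod 2)) (X : Set V) :
    cutRank A X = (A.submatrix (Subtype.val : ↥(Xᶜ) → V) (Subtype.val : ↥X → V)).rank := by
  rw [Matrix.rank_eq_finrank_span_cols]
  unfold cutRank
  have hset : ((fun x : V => fun w : ↥(Xᶜ) => A w.1 x) '' X) =
      Set.range (A.submatrix (Subtype.val : ↥(Xᶜ) → V) (Subtype.val : ↥X → V)).transpose := by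
    rw [Set.image_eq_range]
    rfl
  rw [hset]
  rfl

open Classical in
lemma cutRank_compl (A : Matrix V V (ZMod 2)) (hA : A.IsSymm) (X : Set V) :
    cutRank A Xᶜ = cutRank A X := by
  have main : ((A.submatrix (Subtype.val : ↥(Xᶜᶜ) → V) (Subtype.val : ↥(Xᶜ) → V))).rank
      = ((A.submatrix (Subtype.val : ↥(Xᶜ) → V) (Subtype.val : ↥X → V))).rank := by
    conv_rhs => rw [← Matrix.rank_transpose, Matrix.transpose_submatrix, hA.eq]
    rw [Matrix.rank_eq_finrank_span_cols, Matrix.rank_eq_finrank_span_cols]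
    let e : ↥X ≃ ↥(Xᶜᶜ) :=
      { toFun := fun x => ⟨x.1, by simp only [compl_compl]; exact x.2⟩
        invFun := fun y => ⟨y.1, by simpa only [compl_compl] using y.2⟩
        left_inv := fun _ => rfl
        right_inv := fun _ => rfl }
    let σ : (↥(Xᶜᶜ) → ZMod 2) ≃ₗ[ZMod 2] (↥X → ZMod 2) :=
      LinearEquiv.funCongrLeft (ZMod 2) (ZMod 2) e
    have hmap : Submodule.map (σ : (↥(Xᶜᶜ) → ZMod 2) →ₗ[ZMod 2] (↥X → ZMod 2))
        (Submodule.span (ZMod 2)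
          (Set.range (A.submatrix (Subtype.val : ↥(Xᶜᶜ) → V) (Subtype.val : ↥(Xᶜ) → V)).col)) =
        Submodule.span (ZMod 2)
          (Set.range (A.submatrix (Subtype.val : ↥X → V) (Subtype.val : ↥(Xᶜ) → V)).col) := by
      rw [Submodule.map_span]
      congr 1
      rw [← Set.range_comp]
      rfl
    rw [← hmap, LinearEquiv.finrank_map_eq]
  rw [cutRank_eq_rank, cutRank_eq_rank]
  convert main using 2


theorem stmt5 (A : Matrix V V (ZMod 2)) (hA : A.IsSymm)
    (h : iasKappa A < Fintype.card V) :
    ∃ X : Set V, VerticalSep A (iasKappa A) (tauSet X) ∧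
      iasKappa A = 2 * cutRank A X + 1 := by
  classical
  have hne : ({k : ℕ | ∃ S, VerticalSep A k S} ∪ {iasRank A Set.univ}).Nonempty :=
    ⟨iasRank A Set.univ, Or.inr rfl⟩
  have hmem := Nat.sInf_mem hne
  have hmin : ∀ j T, VerticalSep A j T → iasKappa A ≤ j :=
    fun j T hT => Nat.sInf_le (Or.inl ⟨T, hT⟩)
  rcases hmem with ⟨S, hS⟩ | heq
  · obtain ⟨X, hX⟩ := unsplit hmin (iasBad S).ncard S le_rfl hS
    refine ⟨X, hX, ?_⟩
    have hlam := lambda_exact hmin hX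
    rw [tauSet_compl, iasRank_tauSet, iasRank_tauSet, cutRank_compl A hA] at hlam
    have hcard : X.ncard + Xᶜ.ncard = Fintype.card V := by
      have := Set.ncard_add_ncard_compl X
      rwa [Nat.card_eq_fintype_card] at this
    omega
  · exfalso
    have : iasKappa A = iasRank A Set.univ := heq
    rw [this, iasRank_univ] at h
    omega
end

section
/- Let G be a graph. Then the isotropic connectivity of G and the vertical connectivity of M = M[IAS(G)] are related as follows: κ_B(G) = (κ(M) + 1)/2 if κ(M) < n, and κ_B(G) = ∞ otherwise. -/
open scoped ENat

variable {V : Type*} [Fintype V] [DecidableEq V]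

namespace Stmt7Aux

open Submodule Module

/-! ### Basic vectors and submodules -/

def eVec (v : V) : V → ZMod 2 := fun w => if w = v then 1 else 0

def aCol (A : Matrix V V (ZMod 2)) (v : V) : V → ZMod 2 := fun w => A w v

open scoped Classical in
noncomputable def cVec (A : Matrix V V (ZMod 2)) (X : Set V) (v : V) : V → ZMod 2 :=
  fun w => if w ∈ X then 0 else A w v

open scoped Classical in
noncomputable def gVec (A : Matrix V V (ZMod 2)) (X : Set V) (v : V) : V → ZMod 2 :=
  fun w => if w ∈ X then A w v else 0

noncomputable def EX (X : Set V) : Submodule (ZMod 2) (V → ZMod 2) :=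
  span (ZMod 2) (eVec '' X)

noncomputable def CX (A : Matrix V V (ZMod 2)) (X : Set V) : Submodule (ZMod 2) (V → ZMod 2) :=
  span (ZMod 2) (cVec A X '' X)

def vanish (X : Set V) : Submodule (ZMod 2) (V → ZMod 2) where
  carrier := {f | ∀ w, w ∉ X → f w = 0}
  add_mem' := by intro a b ha hb w hw; simp [ha w hw, hb w hw]
  zero_mem' := by intro w hw; rfl
  smul_mem' := by intro c f hf w hw; simp [hf w hw]

lemma mem_vanish {X : Set V} {f : V → ZMod 2} :
    f ∈ vanish X ↔ ∀ w, w ∉ X → f w = 0 := Iff.rfl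

lemma z2add : ∀ a : ZMod 2, a + a = 0 := by decide

lemma addSelf (f : V → ZMod 2) : f + f = 0 := by
  funext w; exact z2add _

lemma EX_le_vanish (X : Set V) : EX X ≤ vanish X := by
  rw [EX, span_le]
  rintro _ ⟨v, hv, rfl⟩ w hw
  simp only [eVec]
  rw [if_neg]
  rintro rfl; exact hw hv

lemma mem_EX {X : Set V} (f : V → ZMod 2) (hf : ∀ w, w ∉ X → f w = 0) : f ∈ EX X := by
  classical
  have hrep : f = ∑ v ∈ Finset.univ.filter (· ∈ X), f v • eVec v := by
    funext w
    simp only [Finset.sum_apply, Pi.smul_apply, eVec, smul_eq_mul, mul_ite, mul_one, mul_zero]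
    rw [show (fun v => if w = v then f v else 0) = fun v => if w = v then f v else 0 from rfl]
    rw [Finset.sum_ite_eq]
    by_cases hw : w ∈ X
    · simp [hw]
    · simp [hw, hf w hw]
  rw [hrep]
  exact sum_mem fun v hv => smul_mem _ _ (subset_span ⟨v, (Finset.mem_filter.1 hv).2, rfl⟩)

lemma eVec_eq_basisFun (v : V) : eVec v = Pi.basisFun (ZMod 2) V v := by
  funext w; rw [Pi.basisFun_apply]; simp [eVec, Pi.single_apply]

lemma finrank_EX (X : Set V) : finrank (ZMod 2) (EX X) = X.ncard := by
  classical
  haveI : Fintype ↥X := Fintype.ofFinite _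
  have hli : LinearIndependent (ZMod 2) (fun x : ↥X => eVec (x : V)) := by
    have h : (fun x : ↥X => eVec (x : V)) = (⇑(Pi.basisFun (ZMod 2) V)) ∘ (Subtype.val) := by
      funext x; exact eVec_eq_basisFun _
    rw [h]
    exact (Pi.basisFun (ZMod 2) V).linearIndependent.comp _ Subtype.val_injective
  rw [EX, Set.image_eq_range, finrank_span_eq_card hli,
    ← Nat.card_coe_set_eq, Nat.card_eq_fintype_card]

lemma CX_le_vanish (A : Matrix V V (ZMod 2)) (X : Set V) : CX A X ≤ vanish Xᶜ := by
  rw [CX, span_le]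
  rintro _ ⟨v, hv, rfl⟩ w hw
  have hwX : w ∈ X := by simpa using hw
  simp [cVec, hwX]

lemma CX_le_EX_compl (A : Matrix V V (ZMod 2)) (X : Set V) : CX A X ≤ EX Xᶜ := by
  rw [CX, span_le]
  rintro _ ⟨v, hv, rfl⟩
  apply mem_EX
  intro w hw
  have hwX : w ∈ X := by simpa using hw
  simp [cVec, hwX]

lemma inf_eq_bot_of_vanish {X : Set V} {p q : Submodule (ZMod 2) (V → ZMod 2)}
    (hp : p ≤ vanish X) (hq : q ≤ vanish Xᶜ) : p ⊓ q = ⊥ := by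
  rw [eq_bot_iff]
  rintro f ⟨hf1, hf2⟩
  have h1 := hp hf1
  have h2 := hq hf2
  simp only [mem_bot]
  funext w
  by_cases hw : w ∈ X
  · exact h2 w (by simp [hw])
  · exact h1 w hw

/-! ### cutRank facts -/

open scoped Classical in
noncomputable def extMap (Y : Set V) : (↥Y → ZMod 2) →ₗ[ZMod 2] (V → ZMod 2) where
  toFun g := fun w => if h : w ∈ Y then g ⟨w, h⟩ else 0
  map_add' g h := by funext w; by_cases hw : w ∈ Y <;> simp [hw]
  map_smul' c g := by funext w; by_cases hw : w ∈ Y <;> simp [hw]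

lemma extMap_injective (Y : Set V) : Function.Injective (extMap Y) := by
  intro g₁ g₂ h
  funext z
  have := congrFun h z.1
  simpa [extMap, z.2] using this

lemma finrank_CX (A : Matrix V V (ZMod 2)) (X : Set V) :
    finrank (ZMod 2) (CX A X) = cutRank A X := by
  classical
  have himg : cVec A X '' X = ⇑(extMap Xᶜ) '' ((fun x : V => fun w : ↥(Xᶜ) => A w.1 x) '' X) := by
    rw [← Set.image_comp]
    apply congrArg (· '' X)
    funext x
    funext w
    by_cases hw : w ∈ X
    · have hw' : w ∉ Xᶜ := by simpa using hw
      simp [Function.comp, extMap, cVec, hw, hw']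
    · have hw' : w ∈ Xᶜ := by simpa using hw
      simp [Function.comp, extMap, cVec, hw, hw']
  have hmap : CX A X = Submodule.map (extMap Xᶜ)
      (span (ZMod 2) ((fun x : V => fun w : ↥(Xᶜ) => A w.1 x) '' X)) := by
    rw [CX, himg, span_image]
  rw [hmap, cutRank]
  exact (LinearEquiv.finrank_eq (equivMapOfInjective _ (extMap_injective Xᶜ) _)).symm

open scoped Classical in
noncomputable def cutMat (A : Matrix V V (ZMod 2)) (X : Set V) : Matrix V V (ZMod 2) :=
  Matrix.of fun w v => if v ∈ X then cVec A X v w else 0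

lemma cutMat_transpose {A : Matrix V V (ZMod 2)} (hA : A.IsSymm) (X : Set V) :
    (cutMat A X).transpose = cutMat A Xᶜ := by
  ext v w
  simp only [Matrix.transpose_apply, cutMat, Matrix.of_apply, cVec, Set.mem_compl_iff]
  by_cases hv : v ∈ X <;> by_cases hw : w ∈ X <;> simp [hv, hw]
  exact (hA.apply w v).symm

lemma rank_cutMat (A : Matrix V V (ZMod 2)) (X : Set V) :
    (cutMat A X).rank = cutRank A X := by
  classical
  have hspan : span (ZMod 2) (Set.range (cutMat A X).transpose) = CX A X := by
    apply le_antisymm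
    · rw [span_le]
      rintro _ ⟨v, rfl⟩
      by_cases hv : v ∈ X
      · have hcol : (cutMat A X).transpose v = cVec A X v := by
          funext w; simp [cutMat, Matrix.transpose_apply, hv]
        rw [hcol]; exact subset_span ⟨v, hv, rfl⟩
      · have hcol : (cutMat A X).transpose v = 0 := by
          funext w; simp [cutMat, Matrix.transpose_apply, hv]
        rw [hcol]; exact zero_mem _
    · rw [CX, span_le]
      rintro _ ⟨v, hv, rfl⟩
      have hcol : cVec A X v = (cutMat A X).transpose v := by
        funext w; simp [cutMat, Matrix.transpose_apply, hv]
      rw [hcol]; exact subset_span ⟨v, rfl⟩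
  rw [Matrix.rank_eq_finrank_span_cols,
    show Set.range (cutMat A X).col = Set.range (cutMat A X).transpose from rfl, hspan, finrank_CX]

lemma cutRank_compl {A : Matrix V V (ZMod 2)} (hA : A.IsSymm) (X : Set V) :
    cutRank A Xᶜ = cutRank A X := by
  rw [← rank_cutMat, ← rank_cutMat, ← cutMat_transpose hA, Matrix.rank_transpose]

lemma finrank_EX_sup_CX (A : Matrix V V (ZMod 2)) (X : Set V) :
    finrank (ZMod 2) ((EX X ⊔ CX A X : Submodule (ZMod 2) (V → ZMod 2))) =
      X.ncard + cutRank A X := by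
  have hinf : EX X ⊓ CX A X = ⊥ :=
    inf_eq_bot_of_vanish (EX_le_vanish X) (CX_le_vanish A X)
  have h := finrank_sup_add_finrank_inf_eq (EX X) (CX A X)
  rw [hinf, finrank_bot, add_zero, finrank_EX, finrank_CX] at h
  exact h

/-! ### Column identities -/

lemma fin3cases : ∀ i : Fin 3, i = 0 ∨ i = 1 ∨ i = 2 := by decide

lemma iasCol_zero (A : Matrix V V (ZMod 2)) (v : V) : iasCol A (v, 0) = eVec v := by
  funext w; simp [iasCol, eVec]

lemma iasCol_one (A : Matrix V V (ZMod 2)) (v : V) : iasCol A (v, 1) = aCol A v := by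
  funext w
  simp [iasCol, aCol, show (1 : Fin 3) ≠ 0 by decide]

lemma iasCol_two (A : Matrix V V (ZMod 2)) (v : V) :
    iasCol A (v, 2) = aCol A v + eVec v := by
  funext w
  simp [iasCol, aCol, eVec, show (2 : Fin 3) ≠ 0 by decide, show (2 : Fin 3) ≠ 1 by decide]

lemma pair_mem (A : Matrix V V (ZMod 2)) {T : Set (V × Fin 3)} {v : V} {i j : Fin 3}
    (hij : i ≠ j) (hi : (v, i) ∈ T) (hj : (v, j) ∈ T) :
    eVec v ∈ span (ZMod 2) (iasCol A '' T) ∧ aCol A v ∈ span (ZMod 2) (iasCol A '' T) := by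
  have mi : iasCol A (v, i) ∈ span (ZMod 2) (iasCol A '' T) := subset_span ⟨(v, i), hi, rfl⟩
  have mj : iasCol A (v, j) ∈ span (ZMod 2) (iasCol A '' T) := subset_span ⟨(v, j), hj, rfl⟩
  have h20 : aCol A v = iasCol A (v, 2) + iasCol A (v, 0) := by
    rw [iasCol_two, iasCol_zero, add_assoc, addSelf, add_zero]
  have h12 : eVec v = iasCol A (v, 1) + iasCol A (v, 2) := by
    rw [iasCol_one, iasCol_two, ← add_assoc, addSelf, zero_add]
  rcases fin3cases i with rfl | rfl | rfl <;> rcases fin3cases j with rfl | rfl | rfl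
  · exact absurd rfl hij
  · exact ⟨iasCol_zero A v ▸ mi, iasCol_one A v ▸ mj⟩
  · exact ⟨iasCol_zero A v ▸ mi, h20 ▸ add_mem mj mi⟩
  · exact ⟨iasCol_zero A v ▸ mj, iasCol_one A v ▸ mi⟩
  · exact absurd rfl hij
  · exact ⟨h12 ▸ add_mem mi mj, iasCol_one A v ▸ mi⟩
  · exact ⟨iasCol_zero A v ▸ mj, h20 ▸ add_mem mi mj⟩
  · exact ⟨h12 ▸ add_mem mj mi, iasCol_one A v ▸ mj⟩
  · exact absurd rfl hij

lemma gVec_mem_EX (A : Matrix V V (ZMod 2)) (X : Set V) (v : V) : gVec A X v ∈ EX X := by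
  apply mem_EX
  intro w hw
  simp [gVec, hw]

lemma aCol_decomp (A : Matrix V V (ZMod 2)) (X : Set V) (v : V) :
    aCol A v = gVec A X v + cVec A X v := by
  funext w
  by_cases hw : w ∈ X <;> simp [aCol, gVec, cVec, hw]

lemma cVec_decomp (A : Matrix V V (ZMod 2)) (X : Set V) (v : V) :
    cVec A X v = aCol A v + gVec A X v := by
  rw [aCol_decomp A X v, add_comm (gVec A X v), add_assoc, addSelf, add_zero]

/-! ### Spans of triple parts -/

lemma span_tau_part (A : Matrix V V (ZMod 2)) {S : Set (V × Fin 3)} {X : Set V}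
    (hsub : ∀ p ∈ S, p.1 ∈ X)
    (hfull : ∀ v ∈ X, ∃ i j : Fin 3, i ≠ j ∧ (v, i) ∈ S ∧ (v, j) ∈ S) :
    span (ZMod 2) (iasCol A '' S) = EX X ⊔ CX A X := by
  have hEX : EX X ≤ span (ZMod 2) (iasCol A '' S) := by
    rw [EX, span_le]
    rintro _ ⟨v, hv, rfl⟩
    obtain ⟨i, j, hij, hi, hj⟩ := hfull v hv
    exact (pair_mem A hij hi hj).1
  apply le_antisymm
  · rw [span_le]
    rintro _ ⟨⟨v, i⟩, hp, rfl⟩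
    have hv : v ∈ X := hsub _ hp
    have he : eVec v ∈ (EX X ⊔ CX A X : Submodule (ZMod 2) (V → ZMod 2)) :=
      le_sup_left (α := Submodule (ZMod 2) (V → ZMod 2)) (subset_span ⟨v, hv, rfl⟩)
    have ha : aCol A v ∈ (EX X ⊔ CX A X : Submodule (ZMod 2) (V → ZMod 2)) := by
      rw [aCol_decomp A X v]
      exact add_mem (le_sup_left (α := Submodule (ZMod 2) (V → ZMod 2)) (gVec_mem_EX A X v))
        (le_sup_right (α := Submodule (ZMod 2) (V → ZMod 2)) (subset_span ⟨v, hv, rfl⟩))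
    rcases fin3cases i with rfl | rfl | rfl
    · rw [iasCol_zero]; exact he
    · rw [iasCol_one]; exact ha
    · rw [iasCol_two]; exact add_mem ha he
  · apply sup_le hEX
    rw [CX, span_le]
    rintro _ ⟨v, hv, rfl⟩
    rw [cVec_decomp A X v]
    obtain ⟨i, j, hij, hi, hj⟩ := hfull v hv
    exact add_mem (pair_mem A hij hi hj).2 (hEX (gVec_mem_EX A X v))

lemma tauSet_compl (X : Set V) : (tauSet X)ᶜ = tauSet Xᶜ := rfl

lemma iasRank_tauSet (A : Matrix V V (ZMod 2)) (X : Set V) :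
    iasRank A (tauSet X) = X.ncard + cutRank A X := by
  have h := span_tau_part A (S := tauSet X) (X := X) (fun p hp => hp)
    (fun v hv => ⟨0, 1, by decide, hv, hv⟩)
  rw [iasRank, h, finrank_EX_sup_CX]

lemma span_univ_eq_top (A : Matrix V V (ZMod 2)) :
    span (ZMod 2) (iasCol A '' (Set.univ : Set (V × Fin 3))) = ⊤ := by
  have h1 : EX (Set.univ : Set V) ≤ span (ZMod 2) (iasCol A '' Set.univ) := by
    rw [EX, span_le]
    rintro _ ⟨v, _, rfl⟩
    exact subset_span ⟨(v, 0), Set.mem_univ _, iasCol_zero A v⟩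
  exact eq_top_iff.2 fun f _ => h1 (mem_EX f (fun w hw => absurd (Set.mem_univ w) hw))

lemma iasRank_univ (A : Matrix V V (ZMod 2)) :
    iasRank A Set.univ = Fintype.card V := by
  rw [iasRank, span_univ_eq_top, finrank_top, Module.finrank_pi]

lemma sum_ranks (A : Matrix V V (ZMod 2)) (S : Set (V × Fin 3)) :
    iasRank A S + iasRank A Sᶜ = Fintype.card V +
      finrank (ZMod 2) ((span (ZMod 2) (iasCol A '' S) ⊓ span (ZMod 2) (iasCol A '' Sᶜ) :
        Submodule (ZMod 2) (V → ZMod 2))) := by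
  have hsup : span (ZMod 2) (iasCol A '' S) ⊔ span (ZMod 2) (iasCol A '' Sᶜ) = ⊤ := by
    rw [← span_union, ← Set.image_union, Set.union_compl_self, span_univ_eq_top]
  have h := finrank_sup_add_finrank_inf_eq (span (ZMod 2) (iasCol A '' S))
    (span (ZMod 2) (iasCol A '' Sᶜ))
  rw [hsup, finrank_top, Module.finrank_pi] at h
  rw [iasRank, iasRank, ← h]

lemma iasLambda_eq (A : Matrix V V (ZMod 2)) (S : Set (V × Fin 3)) :
    iasLambda A S = finrank (ZMod 2) ((span (ZMod 2) (iasCol A '' S) ⊓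
      span (ZMod 2) (iasCol A '' Sᶜ) : Submodule (ZMod 2) (V → ZMod 2))) := by
  have h := sum_ranks A S
  rw [iasLambda, iasRank_univ]
  omega

/-! ### The big side of a separation -/

def bigSide (S : Set (V × Fin 3)) : Set V :=
  {v | ∃ i j : Fin 3, i ≠ j ∧ (v, i) ∈ S ∧ (v, j) ∈ S}

lemma bigSide_compl (S : Set (V × Fin 3)) : bigSide Sᶜ = (bigSide S)ᶜ := by
  ext v
  simp only [bigSide, Set.mem_setOf_eq, Set.mem_compl_iff]
  constructor
  · rintro ⟨i, j, hij, hi, hj⟩ ⟨i', j', hij', hi', hj'⟩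
    have h4 : ∀ a b a' b' : Fin 3, a ≠ b → a' ≠ b' →
        (a' = a ∨ a' = b ∨ b' = a ∨ b' = b) := by decide
    rcases h4 i j i' j' hij hij' with rfl | rfl | rfl | rfl
    · exact hi hi'
    · exact hj hi'
    · exact hi hj'
    · exact hj hj'
  · intro hn
    by_cases h0 : (v, (0 : Fin 3)) ∈ S <;> by_cases h1 : (v, (1 : Fin 3)) ∈ S <;>
      by_cases h2 : (v, (2 : Fin 3)) ∈ S
    · exact absurd ⟨0, 1, by decide, h0, h1⟩ hn
    · exact absurd ⟨0, 1, by decide, h0, h1⟩ hn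
    · exact absurd ⟨0, 2, by decide, h0, h2⟩ hn
    · exact ⟨1, 2, by decide, h1, h2⟩
    · exact absurd ⟨1, 2, by decide, h1, h2⟩ hn
    · exact ⟨0, 2, by decide, h0, h2⟩
    · exact ⟨0, 1, by decide, h0, h1⟩
    · exact ⟨0, 1, by decide, h0, h1⟩

lemma single_col_mem (A : Matrix V V (ZMod 2)) {S : Set (V × Fin 3)} {v : V} {i : Fin 3}
    (hv : v ∉ bigSide S) (hvi : (v, i) ∈ S) :
    iasCol A (v, i) ∈ span (ZMod 2) (iasCol A '' Sᶜ) := by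
  have hother : ∀ j : Fin 3, j ≠ i → (v, j) ∈ Sᶜ := by
    intro j hj
    by_contra hmem
    exact hv ⟨i, j, Ne.symm hj, hvi, not_not.1 hmem⟩
  have key : ∀ j k : Fin 3, j ≠ i → k ≠ i →
      iasCol A (v, i) = iasCol A (v, j) + iasCol A (v, k) →
      iasCol A (v, i) ∈ span (ZMod 2) (iasCol A '' Sᶜ) := by
    intro j k hj hk heq
    rw [heq]
    exact add_mem (subset_span ⟨(v, j), hother j hj, rfl⟩)
      (subset_span ⟨(v, k), hother k hk, rfl⟩)
  have e0 : iasCol A (v, 0) = iasCol A (v, 1) + iasCol A (v, 2) := by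
    rw [iasCol_zero, iasCol_one, iasCol_two, ← add_assoc, addSelf, zero_add]
  have e1 : iasCol A (v, 1) = iasCol A (v, 0) + iasCol A (v, 2) := by
    rw [iasCol_zero, iasCol_one, iasCol_two, add_comm (aCol A v) (eVec v), ← add_assoc,
      addSelf, zero_add]
  have e2 : iasCol A (v, 2) = iasCol A (v, 0) + iasCol A (v, 1) := by
    rw [iasCol_zero, iasCol_one, iasCol_two, add_comm]
  rcases fin3cases i with rfl | rfl | rfl
  · exact key 1 2 (by decide) (by decide) e0
  · exact key 0 2 (by decide) (by decide) e1
  · exact key 0 1 (by decide) (by decide) e2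

lemma span_inter_eq (A : Matrix V V (ZMod 2)) (S : Set (V × Fin 3)) :
    span (ZMod 2) (iasCol A '' (S ∩ tauSet (bigSide S))) =
      EX (bigSide S) ⊔ CX A (bigSide S) :=
  span_tau_part A (fun p hp => hp.2) (fun v hv => by
    obtain ⟨i, j, hij, hi, hj⟩ := hv
    exact ⟨i, j, hij, ⟨hi, ⟨i, j, hij, hi, hj⟩⟩, ⟨hj, ⟨i, j, hij, hi, hj⟩⟩⟩)

lemma span_compl_inter (A : Matrix V V (ZMod 2)) (S : Set (V × Fin 3)) :
    span (ZMod 2) (iasCol A '' (S ∩ tauSet (bigSide S))ᶜ) =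
      span (ZMod 2) (iasCol A '' Sᶜ) := by
  apply le_antisymm
  · rw [span_le]
    rintro _ ⟨⟨v, i⟩, hp, rfl⟩
    rw [Set.mem_compl_iff, Set.mem_inter_iff, not_and_or] at hp
    by_cases hvS : (v, i) ∈ S
    · rcases hp with h | h
      · exact absurd hvS h
      · exact single_col_mem A h hvS
    · exact subset_span ⟨(v, i), hvS, rfl⟩
  · exact span_mono (Set.image_mono (Set.compl_subset_compl.2 Set.inter_subset_left))

lemma EC_le_span (A : Matrix V V (ZMod 2)) (S : Set (V × Fin 3)) :
    EX (bigSide S) ⊔ CX A (bigSide S) ≤ span (ZMod 2) (iasCol A '' S) := by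
  rw [← span_inter_eq A S]
  exact span_mono (Set.image_mono Set.inter_subset_left)

lemma twoC_le_lambda {A : Matrix V V (ZMod 2)} (hA : A.IsSymm) (S : Set (V × Fin 3)) :
    2 * cutRank A (bigSide S) ≤ iasLambda A S := by
  set X := bigSide S with hXdef
  have hXc : bigSide Sᶜ = Xᶜ := bigSide_compl S
  have hEXc : EX Xᶜ ≤ span (ZMod 2) (iasCol A '' Sᶜ) := by
    have h := EC_le_span A Sᶜ
    rw [hXc] at h
    exact le_trans le_sup_left h
  have hEXX : EX X ≤ span (ZMod 2) (iasCol A '' S) := le_trans le_sup_left (EC_le_span A S)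
  have h1 : CX A X ≤ span (ZMod 2) (iasCol A '' S) := le_trans le_sup_right (EC_le_span A S)
  have h2 : CX A X ≤ span (ZMod 2) (iasCol A '' Sᶜ) := le_trans (CX_le_EX_compl A X) hEXc
  have h3 : CX A Xᶜ ≤ span (ZMod 2) (iasCol A '' Sᶜ) := by
    have h := EC_le_span A Sᶜ
    rw [hXc] at h
    exact le_trans le_sup_right h
  have h4 : CX A Xᶜ ≤ span (ZMod 2) (iasCol A '' S) := by
    have h := CX_le_EX_compl A Xᶜ
    rw [compl_compl] at h
    exact le_trans h hEXX
  have hsub : CX A X ⊔ CX A Xᶜ ≤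
      (span (ZMod 2) (iasCol A '' S) ⊓ span (ZMod 2) (iasCol A '' Sᶜ) :
        Submodule (ZMod 2) (V → ZMod 2)) :=
    sup_le (le_inf h1 h2) (le_inf h4 h3)
  have hinf : CX A X ⊓ CX A Xᶜ = ⊥ :=
    inf_eq_bot_of_vanish (CX_le_vanish A X) (CX_le_vanish A Xᶜ)
  have hdim : finrank (ZMod 2) ((CX A X ⊔ CX A Xᶜ : Submodule (ZMod 2) (V → ZMod 2))) =
      2 * cutRank A X := by
    have h := finrank_sup_add_finrank_inf_eq (CX A X) (CX A Xᶜ)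
    rw [hinf, finrank_bot, add_zero, finrank_CX, finrank_CX, cutRank_compl hA] at h
    omega
  rw [iasLambda_eq A S, ← hdim]
  exact Submodule.finrank_mono hsub

lemma verticalSep_compl {A : Matrix V V (ZMod 2)} {k : ℕ} {S : Set (V × Fin 3)}
    (h : VerticalSep A k S) : VerticalSep A k Sᶜ := by
  have hlc : iasLambda A Sᶜ = iasLambda A S := by
    rw [iasLambda, iasLambda, compl_compl]; omega
  obtain ⟨h0, h1, h2, h3⟩ := h
  refine ⟨h0, ?_, h3, ?_⟩
  · rw [hlc]; exact h1
  · rw [compl_compl]; exact h2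

/-! ### The main minimality argument -/

lemma step {A : Matrix V V (ZMod 2)} (hA : A.IsSymm) {k : ℕ} {S : Set (V × Fin 3)}
    (hS : VerticalSep A k S)
    (hmin : ∀ k' S', VerticalSep A k' S' → k ≤ k') :
    k ≤ (bigSide S).ncard + cutRank A (bigSide S) := by
  classical
  obtain ⟨hk0, hlam, hrS, hrSc⟩ := hS
  set X := bigSide S with hXdef
  set c := cutRank A X with hcdef
  have hlam_eq := iasLambda_eq A S
  have hsum := sum_ranks A S
  have hrSc_lt : iasRank A Sᶜ < Fintype.card V := by omega
  have hEC_le : EX X ⊔ CX A X ≤ span (ZMod 2) (iasCol A '' S) := EC_le_span A S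
  have hECdim : finrank (ZMod 2) ((EX X ⊔ CX A X : Submodule (ZMod 2) (V → ZMod 2))) =
      X.ncard + c := finrank_EX_sup_CX A X
  have hXc_size : X.ncard + c + 1 ≤ Fintype.card V := by
    by_contra hcon
    have hle_n : X.ncard + c ≤ Fintype.card V := by
      rw [← hECdim]
      have h := Submodule.finrank_le (EX X ⊔ CX A X : Submodule (ZMod 2) (V → ZMod 2))
      rwa [Module.finrank_pi] at h
    have heq : finrank (ZMod 2) ((EX X ⊔ CX A X : Submodule (ZMod 2) (V → ZMod 2))) =
        finrank (ZMod 2) (V → ZMod 2) := by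
      rw [hECdim, Module.finrank_pi]; omega
    have htop : (EX X ⊔ CX A X : Submodule (ZMod 2) (V → ZMod 2)) = ⊤ :=
      Submodule.eq_top_of_finrank_eq heq
    have hS_top : span (ZMod 2) (iasCol A '' S) = ⊤ := eq_top_iff.2 (htop ▸ hEC_le)
    have hrSn : iasRank A S = Fintype.card V := by
      rw [iasRank, hS_top, finrank_top, Module.finrank_pi]
    omega
  have hr5 : iasRank A (S ∩ tauSet X) = X.ncard + c := by
    rw [iasRank, span_inter_eq A S]
    exact finrank_EX_sup_CX A X
  have hr5c : iasRank A (S ∩ tauSet X)ᶜ = iasRank A Sᶜ := by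
    rw [iasRank, iasRank, span_compl_inter A S]
  have hsum5 := sum_ranks A (S ∩ tauSet X)
  have hlam5 : iasLambda A (S ∩ tauSet X) + Fintype.card V =
      X.ncard + c + iasRank A Sᶜ := by
    rw [iasLambda, iasRank_univ]
    omega
  have hvert5 : VerticalSep A (iasLambda A (S ∩ tauSet X) + 1) (S ∩ tauSet X) := by
    refine ⟨Nat.succ_pos _, Nat.lt_succ_self _, by omega, by omega⟩
  have hkle := hmin _ _ hvert5
  omega

lemma main {A : Matrix V V (ZMod 2)} (hA : A.IsSymm) {k : ℕ} {S : Set (V × Fin 3)}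
    (hS : VerticalSep A k S)
    (hmin : ∀ k' S', VerticalSep A k' S' → k ≤ k') :
    IsotropicSep A ((k + 1) / 2) (bigSide S) ∧ 2 * cutRank A (bigSide S) + 1 = k := by
  classical
  have h1 := step hA hS hmin
  have hSc : VerticalSep A k Sᶜ := verticalSep_compl hS
  have h2 := step hA hSc hmin
  rw [bigSide_compl S, cutRank_compl hA] at h2
  have h2c := twoC_le_lambda hA S
  have hlam := hS.2.1
  set X := bigSide S with hXdef
  set c := cutRank A X with hcdef
  have hncard : X.ncard + Xᶜ.ncard = Fintype.card V := by
    rw [Set.ncard_add_ncard_compl, Nat.card_eq_fintype_card]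
  have hrt : iasRank A (tauSet X) = X.ncard + c := iasRank_tauSet A X
  have hrtc : iasRank A (tauSet X)ᶜ = Xᶜ.ncard + c := by
    rw [tauSet_compl, iasRank_tauSet, cutRank_compl hA]
  have hlamt : iasLambda A (tauSet X) = 2 * c := by
    rw [iasLambda, iasRank_univ]
    omega
  have hvert : VerticalSep A (2 * c + 1) (tauSet X) :=
    ⟨Nat.succ_pos _, by omega, by omega, by omega⟩
  have hk2 := hmin _ _ hvert
  exact ⟨⟨by omega, by omega, by omega⟩, by omega⟩

/-! ### The easy direction -/

lemma tau_vertical {A : Matrix V V (ZMod 2)} (hA : A.IsSymm) {j : ℕ} {X : Set V}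
    (h : IsotropicSep A j X) :
    VerticalSep A (2 * cutRank A X + 1) (tauSet X) := by
  obtain ⟨h1, h2, h3⟩ := h
  have hncard : X.ncard + Xᶜ.ncard = Fintype.card V := by
    rw [Set.ncard_add_ncard_compl, Nat.card_eq_fintype_card]
  have hrt : iasRank A (tauSet X) = X.ncard + cutRank A X := iasRank_tauSet A X
  have hrtc : iasRank A (tauSet X)ᶜ = Xᶜ.ncard + cutRank A X := by
    rw [tauSet_compl, iasRank_tauSet, cutRank_compl hA]
  have hlamt : iasLambda A (tauSet X) = 2 * cutRank A X := by
    rw [iasLambda, iasRank_univ]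
    omega
  exact ⟨Nat.succ_pos _, by omega, by omega, by omega⟩

end Stmt7Aux


theorem stmt7 (A : Matrix V V (ZMod 2)) (hA : A.IsSymm) :
    (iasKappa A < Fintype.card V → kappaB A = ((iasKappa A + 1) / 2 : ℕ)) ∧
    (¬ iasKappa A < Fintype.card V → kappaB A = ⊤) := by
  classical
  have hne : ({k : ℕ | ∃ S, VerticalSep A k S} ∪ {iasRank A Set.univ}).Nonempty :=
    ⟨iasRank A Set.univ, Or.inr rfl⟩
  constructor
  · intro hlt
    have hmem : iasKappa A ∈ ({k : ℕ | ∃ S, VerticalSep A k S} ∪ {iasRank A Set.univ}) :=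
      Nat.sInf_mem hne
    have hmin : ∀ k' S', VerticalSep A k' S' → iasKappa A ≤ k' := fun k' S' h' =>
      Nat.sInf_le (Or.inl ⟨S', h'⟩)
    rcases hmem with ⟨S, hS⟩ | hcard
    · obtain ⟨hiso, hc⟩ := Stmt7Aux.main hA hS hmin
      apply le_antisymm
      · exact sInf_le ⟨(iasKappa A + 1) / 2, rfl, _, hiso⟩
      · apply le_sInf
        rintro b ⟨k', rfl, X', h'⟩
        have hv := Stmt7Aux.tau_vertical hA h'
        have hb1 : iasKappa A ≤ 2 * cutRank A X' + 1 := hmin _ _ hv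
        have hb2 : cutRank A X' < k' := h'.2.2
        exact Nat.cast_le.2 (by omega)
    · rw [Stmt7Aux.iasRank_univ] at hcard
      have hx : iasKappa A = Fintype.card V := hcard
      omega
  · intro hge
    have hempty : {j : ℕ∞ | ∃ k : ℕ, (k : ℕ∞) = j ∧ ∃ X, IsotropicSep A k X} = ∅ := by
      rw [Set.eq_empty_iff_forall_notMem]
      rintro b ⟨k', rfl, X', h'⟩
      have hv := Stmt7Aux.tau_vertical hA h'
      have hb1 : iasKappa A ≤ 2 * cutRank A X' + 1 := Nat.sInf_le (Or.inl ⟨_, hv⟩)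
      have hb2 : cutRank A X' < k' := h'.2.2
      have hb3 : k' ≤ X'.ncard := h'.1
      have hb4 : k' ≤ X'ᶜ.ncard := h'.2.1
      have hb5 : X'.ncard + X'ᶜ.ncard = Fintype.card V := by
        rw [Set.ncard_add_ncard_compl, Nat.card_eq_fintype_card]
      omega
    rw [kappaB, hempty, sInf_empty]
end
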